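/- For x = (x₁,x₂,x₃) ∈ [0,∞)³ set T(x) = 1 + c₂x₂ + c₃x₃ and T_M(x) = 1 + c_{2,M}x₂ + c_{3,M}x₃. For the Lie bracket convention [V,W](x) = DW(x)·V(x) − DV(x)·W(x), the bracket of the vector fields g(·,0) and g(·,1) satisfies, at every x ∈ [0,∞)³: [g(·,0), g(·,1)](x) = ( q₃x₁c_{1,M}/T_M(x), c₃c₁x₁c_{1,M}/(T(x)²·T_M(x)), W₃(x) ), where W₃(x) = d_M·c_{1,M}/T_M(x) − (c_{1,M}c_{2,M}/T_M(x)²)·(c₁x₁/T(x) − d·x₂) + c_{1,M}c_{3,M}·d_M·x₃/T_M(x)². -/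

import Mathlib

open Set Real

set_option maxHeartbeats 1000000 in
/-- explicit computation of the Lie bracket
`[g(·,0), g(·,1)](x) = Dg(·,1)(x)·g(x,0) − Dg(·,0)(x)·g(x,1)` at every point of
`[0,∞)³`. -/
theorem stmt_15
    (a q₁ c₁ d c₁M dM q₂ q₃ c₂ c₃ c₂M c₃M : ℝ)
    (ha : 0 < a) (hq₁ : 0 < q₁) (hc₁ : 0 < c₁) (hd : 0 < d)
    (hc₁M : 0 < c₁M) (hdM : 0 < dM)
    (hq₂ : 0 ≤ q₂) (hq₃ : 0 ≤ q₃) (hc₂ : 0 ≤ c₂) (hc₃ : 0 ≤ c₃)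
    (hc₂M : 0 ≤ c₂M) (hc₃M : 0 ≤ c₃M)
    (g : ℝ × ℝ × ℝ → ℝ → ℝ × ℝ × ℝ)
    (hg : ∀ (x : ℝ × ℝ × ℝ) (i : ℝ), g x i =
      (a * (1 - x.1) - (q₁ + q₂ * x.2.1 + q₃ * x.2.2) * x.1,
       c₁ / (1 + c₂ * x.2.1 + c₃ * x.2.2) * x.1 - d * x.2.1,
       c₁M / (1 + c₂M * x.2.1 + c₃M * x.2.2) * i - dM * x.2.2)) :
    ∀ x : ℝ × ℝ × ℝ, 0 ≤ x.1 → 0 ≤ x.2.1 → 0 ≤ x.2.2 →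
      fderiv ℝ (fun y => g y 1) x (g x 0) - fderiv ℝ (fun y => g y 0) x (g x 1)
        =
      (q₃ * x.1 * c₁M / (1 + c₂M * x.2.1 + c₃M * x.2.2),
       c₃ * c₁ * x.1 * c₁M /
         ((1 + c₂ * x.2.1 + c₃ * x.2.2) ^ 2 * (1 + c₂M * x.2.1 + c₃M * x.2.2)),
       dM * c₁M / (1 + c₂M * x.2.1 + c₃M * x.2.2)
         - c₁M * c₂M / (1 + c₂M * x.2.1 + c₃M * x.2.2) ^ 2 *
             (c₁ * x.1 / (1 + c₂ * x.2.1 + c₃ * x.2.2) - d * x.2.1)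
         + c₁M * c₃M * dM * x.2.2 / (1 + c₂M * x.2.1 + c₃M * x.2.2) ^ 2) := by

  intro x hx1 hx2 hx3
  have hT : (1 + c₂ * x.2.1 + c₃ * x.2.2) ≠ 0 := by positivity
  have hTM : (1 + c₂M * x.2.1 + c₃M * x.2.2) ≠ 0 := by positivity
  have hp1 : HasFDerivAt (fun y : ℝ × ℝ × ℝ => y.1)
      (ContinuousLinearMap.fst ℝ ℝ (ℝ × ℝ)) x := hasFDerivAt_fst
  have hp2 : HasFDerivAt (fun y : ℝ × ℝ × ℝ => y.2.1)
      ((ContinuousLinearMap.fst ℝ ℝ ℝ).comp (ContinuousLinearMap.snd ℝ ℝ (ℝ × ℝ))) x :=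
    hasFDerivAt_fst.comp x hasFDerivAt_snd
  have hp3 : HasFDerivAt (fun y : ℝ × ℝ × ℝ => y.2.2)
      ((ContinuousLinearMap.snd ℝ ℝ ℝ).comp (ContinuousLinearMap.snd ℝ ℝ (ℝ × ℝ))) x :=
    hasFDerivAt_snd.comp x hasFDerivAt_snd
  have h1 := (((hasFDerivAt_const (1:ℝ) x).sub hp1).const_mul a).sub
      ((((hasFDerivAt_const q₁ x).add (hp2.const_mul q₂)).add (hp3.const_mul q₃)).mul hp1)
  have hTf := ((hasFDerivAt_const (1:ℝ) x).add (hp2.const_mul c₂)).add (hp3.const_mul c₃)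
  have hTMf := ((hasFDerivAt_const (1:ℝ) x).add (hp2.const_mul c₂M)).add (hp3.const_mul c₃M)
  have hinv : HasFDerivAt (fun y : ℝ × ℝ × ℝ => (1 + c₂ * y.2.1 + c₃ * y.2.2)⁻¹) _ x :=
    (hasFDerivAt_inv hT).comp x hTf
  have hinvM : HasFDerivAt (fun y : ℝ × ℝ × ℝ => (1 + c₂M * y.2.1 + c₃M * y.2.2)⁻¹) _ x :=
    (hasFDerivAt_inv hTM).comp x hTMf
  have h2 := ((hinv.const_mul c₁).mul hp1).sub (hp2.const_mul d)
  have h3₁ := (((hinvM.const_mul c₁M)).mul_const (1:ℝ)).sub (hp3.const_mul dM)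
  have h3₀ := (((hinvM.const_mul c₁M)).mul_const (0:ℝ)).sub (hp3.const_mul dM)
  have H1 := h1.prodMk (h2.prodMk h3₁)
  have H0 := h1.prodMk (h2.prodMk h3₀)
  simp only [hg, div_eq_mul_inv]
  simp only [Pi.sub_apply, Pi.add_apply, Pi.mul_apply] at H1 H0
  rw [H1.fderiv, H0.fderiv]
  simp only [ContinuousLinearMap.prod_apply, ContinuousLinearMap.sub_apply,
    ContinuousLinearMap.add_apply, ContinuousLinearMap.smul_apply,
    ContinuousLinearMap.comp_apply, ContinuousLinearMap.coe_fst',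
    ContinuousLinearMap.coe_snd', Prod.mk_sub_mk, smul_eq_mul,
    ContinuousLinearMap.zero_apply, ContinuousLinearMap.coe_comp',
    Function.comp_apply, ContinuousLinearMap.smulRight_apply,
    ContinuousLinearMap.one_apply, ContinuousLinearMap.toSpanSingleton_apply]
  obtain ⟨x1, x2, x3⟩ := x
  simp only at *
  refine Prod.ext ?_ (Prod.ext ?_ ?_)
  · simp only []; field_simp; ring
  · simp only []; field_simp; ring
  · simp only []; field_simp; ring
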